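/- For every Borel subset Z of a metric space X, one has β(Z) ≤ c²(Z)/2. -/

import Mathlib

open MeasureTheory Metric Set
open scoped ENNReal NNReal

/-- The Menger curvature of a triple of points in a metric space. -/
noncomputable def mengerCurvature {X : Type*} [MetricSpace X] (z₁ z₂ z₃ : X) : ℝ :=
  2 * Real.sin (Real.arccos ((dist z₁ z₂ ^ 2 + dist z₂ z₃ ^ 2 - dist z₁ z₃ ^ 2) /
      (2 * dist z₁ z₂ * dist z₂ z₃))) / dist z₁ z₃

/-- The set `𝒯_K(Z)` of triples whose mutual distances are comparable with constant `K`. -/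
def tripleSet {X : Type*} [MetricSpace X] (K : ℝ≥0∞) (Z : Set X) : Set (X × X × X) :=
  {p | p.1 ∈ Z ∧ p.2.1 ∈ Z ∧ p.2.2 ∈ Z ∧
    ∀ i j k l : Fin 3, k ≠ l →
      edist (![p.1, p.2.1, p.2.2] i) (![p.1, p.2.1, p.2.2] j) <
        K * edist (![p.1, p.2.1, p.2.2] k) (![p.1, p.2.1, p.2.2] l)}

/-- The curvature energy `c²_K(Z, μ)`. -/
noncomputable def c2K {X : Type*} [MetricSpace X] [MeasurableSpace X]
    (K : ℝ≥0∞) (Z : Set X) (μ : Measure X) : ℝ≥0∞ :=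
  ∫⁻ p in tripleSet K Z, ENNReal.ofReal (mengerCurvature p.1 p.2.1 p.2.2 ^ 2)
    ∂(μ.prod (μ.prod μ))

/-- `∂(z₁,z₂,z₃)`: the minimal excess over the permutations of the triple. -/
noncomputable def tripleExcess {X : Type*} [MetricSpace X] (z₁ z₂ z₃ : X) : ℝ :=
  min (min (dist z₁ z₂ + dist z₂ z₃ - dist z₁ z₃)
           (dist z₂ z₁ + dist z₁ z₃ - dist z₂ z₃))
      (dist z₁ z₃ + dist z₃ z₂ - dist z₁ z₂)

/-- The quantity `β(Z)`. -/
noncomputable def betaInt {X : Type*} [MetricSpace X] [MeasurableSpace X] [BorelSpace X]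
    (Z : Set X) : ℝ≥0∞ :=
  ∫⁻ p in Z ×ˢ Z ×ˢ Z,
    ENNReal.ofReal (tripleExcess p.1 p.2.1 p.2.2 / Metric.diam {p.1, p.2.1, p.2.2} ^ 3)
    ∂((μH[1] : Measure X).prod ((μH[1] : Measure X).prod (μH[1] : Measure X)))

/-- A metric space is rectifiable if a Lipschitz image of a subset of `ℝ` covers it up to
`ℋ¹`-measure zero. -/
def MetricRectifiable (X : Type*) [MetricSpace X] [MeasurableSpace X] [BorelSpace X] : Prop :=
  ∃ (E : Set ℝ) (f : ℝ → X) (L : ℝ≥0), LipschitzOnWith L f E ∧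
    μH[1] (Set.univ \ f '' E) = 0

/-- The relation `xyz`: `y` lies strictly between `x` and `z`. -/
def MBtw {X : Type*} [MetricSpace X] (x y z : X) : Prop :=
  max (dist x y) (dist y z) < dist x z

/-- The class `Om(φ)` for a metric space. -/
def OmSpace (X : Type*) [MetricSpace X] (φ : ℝ) : Prop :=
  ∀ x y z : X, MBtw x y z → dist x y + φ * dist y z ≤ dist x z

/-- The condition `Om(φ)` for a subset of a metric space. -/
def OmSet {X : Type*} [MetricSpace X] (φ : ℝ) (S : Set X) : Prop :=
  ∀ x ∈ S, ∀ y ∈ S, ∀ z ∈ S, MBtw x y z → dist x y + φ * dist y z ≤ dist x z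

/-- A metric space is orderable if it admits an order compatible with betweenness. -/
def Orderable (X : Type*) [MetricSpace X] : Prop :=
  ∃ o : X → ℝ, Function.Injective o ∧ ∀ x y z : X, o x < o y → o y < o z → MBtw x y z

lemma chain_aux (a b c e p q r : ℝ) (ha : 0 < a) (hb : 0 < b) (hc : 0 < c)
    (hp : 0 < p) (hq : 0 < q) (hr : 0 < r)
    (hac : a ≤ c) (hbc : b ≤ c) (htri : c ≤ a + b)
    (hep : e ≤ p) (hqa : a ≤ q) (hrb : b ≤ r) :
    e * (2 * (a ^ 2 * b ^ 2 * c ^ 2)) ≤ p * q * r * (a + b + c) * c ^ 3 := by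
  have h1 : a * b ≤ c ^ 2 := by nlinarith
  calc e * (2 * (a ^ 2 * b ^ 2 * c ^ 2)) ≤ p * (2 * (a ^ 2 * b ^ 2 * c ^ 2)) := by
        apply mul_le_mul_of_nonneg_right hep (by positivity)
    _ = (a * b) * (2 * p * (a * b * c ^ 2)) := by ring
    _ ≤ c ^ 2 * (2 * p * (a * b * c ^ 2)) := by
        apply mul_le_mul_of_nonneg_right h1 (by positivity)
    _ = a * b * (2 * c) * (p * c ^ 3) := by ring
    _ ≤ q * r * (a + b + c) * (p * c ^ 3) := by
        have h2 : 2 * c ≤ a + b + c := by linarith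
        have : a * b * (2 * c) ≤ q * r * (a + b + c) := by
          apply mul_le_mul (mul_le_mul hqa hrb hb.le hq.le) h2 (by positivity) (by positivity)
        apply mul_le_mul_of_nonneg_right this (by positivity)
    _ = p * q * r * (a + b + c) * c ^ 3 := by ring

lemma menger_key {X : Type*} [MetricSpace X] (z₁ z₂ z₃ : X) :
    tripleExcess z₁ z₂ z₃ / Metric.diam ({z₁, z₂, z₃} : Set X) ^ 3 ≤
      mengerCurvature z₁ z₂ z₃ ^ 2 / 2 := by
  have hd : Metric.diam ({z₁, z₂, z₃} : Set X)
      = max (max (dist z₁ z₂) (dist z₁ z₃)) (dist z₂ z₃) := Metric.diam_triple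
  set a := dist z₁ z₂ with ha_def
  set b := dist z₂ z₃ with hb_def
  set c := dist z₁ z₃ with hc_def
  have hba : dist z₂ z₁ = a := dist_comm z₂ z₁
  have hbc : dist z₃ z₂ = b := dist_comm z₃ z₂
  have hE : tripleExcess z₁ z₂ z₃
      = min (min (a + b - c) (a + c - b)) (c + b - a) := by
    rw [tripleExcess, hba, hbc]
  by_cases he : tripleExcess z₁ z₂ z₃ ≤ 0
  · refine le_trans (div_nonpos_of_nonpos_of_nonneg he (by positivity)) (by positivity)
  push_neg at he
  set e := tripleExcess z₁ z₂ z₃ with he_def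
  have heP : e ≤ a + b - c := hE ▸ (min_le_left _ _).trans (min_le_left _ _)
  have heQ : e ≤ a + c - b := hE ▸ (min_le_left _ _).trans (min_le_right _ _)
  have heR : e ≤ c + b - a := hE ▸ min_le_right _ _
  have hp : 0 < a + b - c := lt_of_lt_of_le he heP
  have hq : 0 < a + c - b := lt_of_lt_of_le he heQ
  have hr : 0 < c + b - a := lt_of_lt_of_le he heR
  have ha : 0 < a := by linarith
  have hb : 0 < b := by linarith
  have hc : 0 < c := by linarith
  set t : ℝ := (a ^ 2 + b ^ 2 - c ^ 2) / (2 * a * b) with ht_def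
  have hT0 : 0 ≤ 1 - t ^ 2 := by
    rw [ht_def, div_pow, sub_nonneg, div_le_one (by positivity)]
    nlinarith [mul_pos hq hr, mul_pos hp (show (0:ℝ) < a + b + c by linarith)]
  have hM : mengerCurvature z₁ z₂ z₃ ^ 2
      = (a + b - c) * (a + c - b) * (c + b - a) * (a + b + c) / (a ^ 2 * b ^ 2 * c ^ 2) := by
    rw [mengerCurvature, Real.sin_arccos, ← ht_def, div_pow, mul_pow, Real.sq_sqrt hT0, ht_def]
    rw [← hc_def]
    field_simp
    ring
  rw [hM, hd, div_div, div_le_div_iff₀ (by positivity) (by positivity)]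
  rcases le_total b (max a c) with hmb | hmb
  · rcases le_total a c with hac | hac
    · have hbc' : b ≤ c := hmb.trans_eq (max_eq_right hac)
      rw [max_eq_right hac, max_eq_left hbc']
      calc e * (a ^ 2 * b ^ 2 * c ^ 2 * 2) = e * (2 * (a ^ 2 * b ^ 2 * c ^ 2)) := by ring
        _ ≤ (a + b - c) * (a + c - b) * (c + b - a) * (a + b + c) * c ^ 3 :=
          chain_aux a b c e _ _ _ ha hb hc hp hq hr hac hbc' (by linarith) heP
            (by linarith) (by linarith)
    · have hba' : b ≤ a := hmb.trans_eq (max_eq_left hac)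
      rw [max_eq_left hac, max_eq_left hba']
      calc e * (a ^ 2 * b ^ 2 * c ^ 2 * 2) = e * (2 * (b ^ 2 * c ^ 2 * a ^ 2)) := by ring
        _ ≤ (b + c - a) * (b + a - c) * (a + c - b) * (b + c + a) * a ^ 3 :=
          chain_aux b c a e _ _ _ hb hc ha (by linarith) (by linarith) hq hba' hac (by linarith)
            (by linarith) (by linarith) (by linarith)
        _ = (a + b - c) * (a + c - b) * (c + b - a) * (a + b + c) * a ^ 3 := by ring
  · rw [max_eq_right hmb]
    have hab' : a ≤ b := (le_max_left a c).trans hmb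
    have hcb' : c ≤ b := (le_max_right a c).trans hmb
    calc e * (a ^ 2 * b ^ 2 * c ^ 2 * 2) = e * (2 * (a ^ 2 * c ^ 2 * b ^ 2)) := by ring
      _ ≤ (a + c - b) * (a + b - c) * (b + c - a) * (a + c + b) * b ^ 3 :=
        chain_aux a c b e _ _ _ ha hc hb hq hp (by linarith) hab' hcb' (by linarith) heQ
          (by linarith) (by linarith)
      _ = (a + b - c) * (a + c - b) * (c + b - a) * (a + b + c) * b ^ 3 := by ring


/-- For every Borel `Z ⊆ X`, `β(Z) ≤ c²(Z)/2`, where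
`c²(Z) = ∫_{Z³} c(z₁,z₂,z₃)² d(ℋ¹)³`. -/
theorem stmt12 (X : Type*) [MetricSpace X] [MeasurableSpace X] [BorelSpace X]
    (Z : Set X) (hZ : MeasurableSet Z) :
    betaInt Z ≤
      (∫⁻ p in Z ×ˢ Z ×ˢ Z, ENNReal.ofReal (mengerCurvature p.1 p.2.1 p.2.2 ^ 2)
        ∂((μH[1] : Measure X).prod ((μH[1] : Measure X).prod (μH[1] : Measure X)))) / 2 := by
  unfold betaInt
  have step : ∀ p : X × X × X,
      ENNReal.ofReal (tripleExcess p.1 p.2.1 p.2.2 / Metric.diam {p.1, p.2.1, p.2.2} ^ 3)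
        ≤ ENNReal.ofReal (mengerCurvature p.1 p.2.1 p.2.2 ^ 2) / 2 := by
    intro p
    calc ENNReal.ofReal (tripleExcess p.1 p.2.1 p.2.2 / Metric.diam {p.1, p.2.1, p.2.2} ^ 3)
        ≤ ENNReal.ofReal (mengerCurvature p.1 p.2.1 p.2.2 ^ 2 / 2) :=
          ENNReal.ofReal_le_ofReal (menger_key p.1 p.2.1 p.2.2)
      _ = ENNReal.ofReal (mengerCurvature p.1 p.2.1 p.2.2 ^ 2) / ENNReal.ofReal 2 :=
          ENNReal.ofReal_div_of_pos two_pos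
      _ = ENNReal.ofReal (mengerCurvature p.1 p.2.1 p.2.2 ^ 2) / 2 := by
          norm_num
  calc (∫⁻ p in Z ×ˢ Z ×ˢ Z,
      ENNReal.ofReal (tripleExcess p.1 p.2.1 p.2.2 / Metric.diam {p.1, p.2.1, p.2.2} ^ 3)
      ∂((μH[1] : Measure X).prod ((μH[1] : Measure X).prod (μH[1] : Measure X))))
      ≤ ∫⁻ p in Z ×ˢ Z ×ˢ Z, ENNReal.ofReal (mengerCurvature p.1 p.2.1 p.2.2 ^ 2) * 2⁻¹
        ∂((μH[1] : Measure X).prod ((μH[1] : Measure X).prod (μH[1] : Measure X))) := by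
        apply lintegral_mono
        intro p
        simpa [div_eq_mul_inv] using step p
    _ = (∫⁻ p in Z ×ˢ Z ×ˢ Z, ENNReal.ofReal (mengerCurvature p.1 p.2.1 p.2.2 ^ 2)
        ∂((μH[1] : Measure X).prod ((μH[1] : Measure X).prod (μH[1] : Measure X)))) * 2⁻¹ :=
        lintegral_mul_const' _ _ (by simp)
    _ = _ := by rw [div_eq_mul_inv]
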